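/- A d × d Hermitian matrix A over ℂ is positive semidefinite if and only if S_m(A) ≥ 0 for every m ∈ {1, …, d}. -/

import Mathlib

open scoped ComplexOrder

/-- `Spoly A m` is the recursively defined quantity `S_m(A)`:
`S_0(A) = 1` and `S_m(A) = (1/m) ∑_{l=1}^m (-1)^(l-1) tr[A^l] S_{m-l}(A)`. -/
noncomputable def Spoly {d : ℕ} (A : Matrix (Fin d) (Fin d) ℂ) : ℕ → ℂ
  | 0 => 1
  | m + 1 => ((m : ℂ) + 1)⁻¹ *
      ∑ l ∈ Finset.range (m + 1), (-1 : ℂ) ^ l * (A ^ (l + 1)).trace * Spoly A (m - l)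

section Aux

open Finset

variable {d : ℕ}

/-- The `m`-th elementary symmetric function of the values of `x`. -/
noncomputable def esymmR (x : Fin d → ℝ) (m : ℕ) : ℝ :=
  ∑ t ∈ Finset.powersetCard m Finset.univ, ∏ i ∈ t, x i

lemma esymmR_zero (x : Fin d → ℝ) : esymmR x 0 = 1 := by
  simp [esymmR]

lemma aeval_esymm (x : Fin d → ℝ) (m : ℕ) :
    MvPolynomial.aeval x (MvPolynomial.esymm (Fin d) ℝ m) = esymmR x m := by
  simp [MvPolynomial.esymm, esymmR]

lemma aeval_psum (x : Fin d → ℝ) (m : ℕ) :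
    MvPolynomial.aeval x (MvPolynomial.psum (Fin d) ℝ m) = ∑ i, x i ^ m := by
  simp [MvPolynomial.psum]

/-- Newton's identity, evaluated at a point. -/
lemma newton (x : Fin d → ℝ) (m : ℕ) :
    ((m : ℝ) + 1) * esymmR x (m + 1) =
      ∑ l ∈ range (m + 1), (-1 : ℝ) ^ l * (∑ i, x i ^ (l + 1)) * esymmR x (m - l) := by
  have h := congrArg (MvPolynomial.aeval x) (MvPolynomial.mul_esymm_eq_sum (Fin d) ℝ (m + 1))
  simp only [map_mul, map_sum, map_pow, map_neg, map_one, map_natCast, aeval_esymm,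
    aeval_psum] at h
  push_cast at h
  rw [h]
  -- convert filtered antidiagonal sum to range sum
  have hbij : ∑ a ∈ Finset.HasAntidiagonal.antidiagonal (m + 1) with a.1 < m + 1,
        (-1:ℝ) ^ a.1 * esymmR x a.1 * (∑ i, x i ^ a.2)
      = ∑ j ∈ range (m + 1), (-1:ℝ) ^ j * esymmR x j * (∑ i, x i ^ (m + 1 - j)) := by
    refine Finset.sum_nbij' (fun a => a.1) (fun j => (j, m + 1 - j)) ?_ ?_ ?_ ?_ ?_
    · intro a ha
      simp only [mem_filter, Finset.HasAntidiagonal.mem_antidiagonal] at ha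
      simpa using ha.2
    · intro j hj
      simp only [mem_range] at hj
      simp only [mem_filter, Finset.HasAntidiagonal.mem_antidiagonal]
      omega
    · intro a ha
      simp only [mem_filter, Finset.HasAntidiagonal.mem_antidiagonal] at ha
      ext
      · simp
      · simp
        omega
    · intro j hj; rfl
    · intro a ha
      simp only [mem_filter, Finset.HasAntidiagonal.mem_antidiagonal] at ha
      have : a.2 = m + 1 - a.1 := by omega
      rw [this]
  rw [hbij, ← Finset.sum_range_reflect, Finset.mul_sum]
  refine Finset.sum_congr rfl fun l hl => ?_
  simp only [mem_range] at hl
  have hl' : l ≤ m := by omega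
  have h1 : m + 1 - 1 - l = m - l := by omega
  have h2 : m + 1 - (m - l) = l + 1 := by omega
  rw [h1, h2]
  have h3 : (-1:ℝ) ^ (m + 1 + 1) * (-1) ^ (m - l) = (-1) ^ l := by
    rw [← pow_add]
    have : m + 1 + 1 + (m - l) = 2 * (m - l) + (l + 2) := by omega
    rw [this, pow_add, pow_mul, neg_one_sq, one_pow, one_mul, pow_add, neg_one_sq, mul_one]
  linear_combination (esymmR x (m - l) * ∑ i, x i ^ (l + 1)) * h3

lemma trace_pow {A : Matrix (Fin d) (Fin d) ℂ} (hA : A.IsHermitian) (l : ℕ) :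
    (A ^ l).trace = ((∑ i, hA.eigenvalues i ^ l : ℝ) : ℂ) := by
  set U : Matrix (Fin d) (Fin d) ℂ := (hA.eigenvectorUnitary : Matrix (Fin d) (Fin d) ℂ)
    with hUdef
  set D : Matrix (Fin d) (Fin d) ℂ := Matrix.diagonal (RCLike.ofReal ∘ hA.eigenvalues)
  have hU' : U * star U = 1 := (Matrix.mem_unitaryGroup_iff).mp hA.eigenvectorUnitary.2
  have hU : star U * U = 1 := mul_eq_one_comm.mp hU'
  have hspec : A = U * D * star U := hA.spectral_theorem
  have hpow : A ^ l = U * D ^ l * star U := by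
    induction l with
    | zero =>
      simp only [pow_zero, Matrix.mul_one]
      exact hU'.symm
    | succ n ih =>
      rw [pow_succ, pow_succ, ih, hspec]
      calc U * D ^ n * star U * (U * D * star U)
          = U * D ^ n * (star U * U) * D * star U := by
            simp only [Matrix.mul_assoc]
        _ = U * (D ^ n * D) * star U := by rw [hU]; simp only [Matrix.mul_one, Matrix.mul_assoc]
  rw [hpow, Matrix.trace_mul_cycle, hU, Matrix.one_mul,
    Matrix.diagonal_pow, Matrix.trace_diagonal]
  push_cast
  simp [Function.comp]

lemma Spoly_eq {A : Matrix (Fin d) (Fin d) ℂ} (hA : A.IsHermitian) (m : ℕ) :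
    Spoly A m = ((esymmR hA.eigenvalues m : ℝ) : ℂ) := by
  induction m using Nat.strong_induction_on with
  | _ m ih =>
    match m with
    | 0 => simp [Spoly, esymmR_zero]
    | m + 1 =>
      rw [Spoly]
      have hsum : ∑ l ∈ range (m + 1), (-1 : ℂ) ^ l * (A ^ (l + 1)).trace * Spoly A (m - l)
          = ((∑ l ∈ range (m + 1), (-1 : ℝ) ^ l * (∑ i, hA.eigenvalues i ^ (l + 1)) *
              esymmR hA.eigenvalues (m - l) : ℝ) : ℂ) := by
        push_cast
        refine Finset.sum_congr rfl fun l hl => ?_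
        rw [trace_pow hA, ih (m - l) (by omega)]
        push_cast
        ring
      rw [hsum, ← newton]
      have hm : ((m : ℂ) + 1) ≠ 0 := Nat.cast_add_one_ne_zero m
      push_cast
      field_simp
      try ring

end Aux

/-- A `d × d` Hermitian matrix `A` is positive semidefinite if and only if
`S_m(A) ≥ 0` for every `m ∈ {1, …, d}`. -/
theorem posSemidef_iff_Spoly_nonneg {d : ℕ} (A : Matrix (Fin d) (Fin d) ℂ)
    (hA : A.IsHermitian) :
    A.PosSemidef ↔ ∀ m ∈ Finset.Icc 1 d, 0 ≤ Spoly A m := by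
  constructor
  · intro hpsd m _
    rw [Spoly_eq hA, Complex.zero_le_real]
    refine Finset.sum_nonneg fun t _ => Finset.prod_nonneg fun i _ => ?_
    exact hpsd.eigenvalues_nonneg i
  · intro h
    apply hA.posSemidef_iff_eigenvalues_nonneg.mpr
    by_contra hc
    simp only [Pi.le_def, Pi.zero_apply, not_forall, not_le] at hc
    obtain ⟨j, hj⟩ := hc
    set t : ℝ := -hA.eigenvalues j with ht
    have ht0 : 0 < t := by simp [ht]; linarith
    have hE : ∀ k ∈ Finset.Icc 1 d, 0 ≤ esymmR hA.eigenvalues k := by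
      intro k hk
      have := h k hk
      rwa [Spoly_eq hA, Complex.zero_le_real] at this
    have hprod : ∏ i, (hA.eigenvalues i + t) = 0 :=
      Finset.prod_eq_zero (Finset.mem_univ j) (by simp [ht])
    have hexp : ∏ i, (hA.eigenvalues i + t)
        = ∑ k ∈ Finset.range (d + 1), esymmR hA.eigenvalues k * t ^ (d - k) := by
      rw [Finset.prod_add]
      rw [Finset.sum_powerset]
      simp only [Finset.card_univ, Fintype.card_fin]
      refine Finset.sum_congr rfl fun k hk => ?_
      rw [esymmR, Finset.sum_mul]
      refine Finset.sum_congr rfl fun s hs => ?_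
      have hcard : s.card = k := (Finset.mem_powersetCard.mp hs).2
      rw [Finset.prod_const, Finset.card_sdiff_of_subset (Finset.subset_univ s),
        Finset.card_univ, Fintype.card_fin, hcard]
    have hpos : 0 < ∑ k ∈ Finset.range (d + 1), esymmR hA.eigenvalues k * t ^ (d - k) := by
      refine Finset.sum_pos' ?_ ⟨0, Finset.mem_range.mpr (Nat.succ_pos d), ?_⟩
      · intro k hk
        rcases Nat.eq_zero_or_pos k with rfl | hk1
        · rw [esymmR_zero]; positivity
        · have : k ∈ Finset.Icc 1 d := by
            simp only [Finset.mem_range] at hk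
            exact Finset.mem_Icc.mpr ⟨hk1, by omega⟩
          exact mul_nonneg (hE k this) (by positivity)
      · rw [esymmR_zero]; simpa using pow_pos ht0 d
    rw [hexp] at hprod
    exact absurd hprod (ne_of_gt hpos)
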